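/- Let V be a complex inner product space, Ω ∈ V, and Θ : V → V an additive bijection which is antiunitary, i.e. Θ(c•v) = conj(c)•Θ(v) for all c ∈ ℂ, v ∈ V, and ⟨Θu, Θv⟩ = conj⟨u, v⟩ for all u, v ∈ V; assume ΘΩ = Ω. Let Φ, Φᶜ : ℝ⁴ → End_ℂ(V) be two families of ℂ-linear endomorphisms satisfying Θ ∘ Φ(x) = Φᶜ(−x) ∘ Θ for every x ∈ ℝ⁴. Let (N_n)_{n≥0} and (Nᶜ_n)_{n≥0}, with N_n, Nᶜ_n : (ℝ⁴)ⁿ → End_ℂ(V), be the normally ordered products defined by the Wick recursion: N₀ = id, N₁(x) = Φ(x), and for n ≥ 2, N_n(x₁,…,x_n) = N_{n−1}(x₁,…,x_{n−1}) ∘ Φ(x_n) − Σ_{l=1}^{n−1} ⟨Ω, Φ(x_l)(Φ(x_n)(Ω))⟩ • N_{n−2}(x₁,…,x̂_l,…,x_{n−1}) (the hat meaning that the argument x_l is omitted), and Nᶜ_n satisfies the identical recursion with Φ replaced everywhere by Φᶜ. Then for every n ≥ 0 and all x₁,…,x_n ∈ ℝ⁴ one has Θ ∘ N_n(x₁,…,x_n)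 = Nᶜ_n(−x₁,…,−x_n) ∘ Θ (normal ordering commutes with the PCT transformation). -/

import Mathlib

/-- **PCT covariance of normally ordered products.**
If `Θ` is an antiunitary (additive, bijective, conjugate-linear, inner-product
conjugating) operator on a complex inner product space `V` fixing the vacuum `Ω`,
and `Φ, Φᶜ` are families of endomorphisms with `Θ ∘ Φ(x) = Φᶜ(-x) ∘ Θ`, then the
normally ordered products `N_n`, `Nᶜ_n` defined by the Wick recursion satisfy
`Θ ∘ N_n(x₁,…,x_n) = Nᶜ_n(-x₁,…,-x_n) ∘ Θ`. -/
theorem pct_commutes_with_normal_ordering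
    {V : Type*} [NormedAddCommGroup V] [InnerProductSpace ℂ V]
    (Ω : V) (Θ : V → V)
    (hΘadd : ∀ u v : V, Θ (u + v) = Θ u + Θ v)
    (hΘbij : Function.Bijective Θ)
    (hΘsmul : ∀ (c : ℂ) (v : V), Θ (c • v) = (starRingEnd ℂ c) • Θ v)
    (hΘinner : ∀ u v : V, (inner ℂ (Θ u) (Θ v) : ℂ) = starRingEnd ℂ (inner ℂ u v : ℂ))
    (hΘΩ : Θ Ω = Ω)
    (Φ Φc : (Fin 4 → ℝ) → Module.End ℂ V)
    (hcov : ∀ (x : Fin 4 → ℝ) (v : V), Θ (Φ x v) = Φc (-x) (Θ v))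
    (N Nc : (n : ℕ) → (Fin n → (Fin 4 → ℝ)) → Module.End ℂ V)
    (hN0 : ∀ x : Fin 0 → (Fin 4 → ℝ), N 0 x = 1)
    (hN1 : ∀ x : Fin 1 → (Fin 4 → ℝ), N 1 x = Φ (x 0))
    (hNrec : ∀ (n : ℕ) (x : Fin (n + 2) → (Fin 4 → ℝ)),
      N (n + 2) x =
        N (n + 1) (fun i => x i.castSucc) * Φ (x (Fin.last (n + 1)))
          - ∑ l : Fin (n + 1),
              (inner ℂ Ω (Φ (x l.castSucc) (Φ (x (Fin.last (n + 1))) Ω)) : ℂ) •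
                N n (fun i => x (l.succAbove i).castSucc))
    (hNc0 : ∀ x : Fin 0 → (Fin 4 → ℝ), Nc 0 x = 1)
    (hNc1 : ∀ x : Fin 1 → (Fin 4 → ℝ), Nc 1 x = Φc (x 0))
    (hNcrec : ∀ (n : ℕ) (x : Fin (n + 2) → (Fin 4 → ℝ)),
      Nc (n + 2) x =
        Nc (n + 1) (fun i => x i.castSucc) * Φc (x (Fin.last (n + 1)))
          - ∑ l : Fin (n + 1),
              (inner ℂ Ω (Φc (x l.castSucc) (Φc (x (Fin.last (n + 1))) Ω)) : ℂ) •
                Nc n (fun i => x (l.succAbove i).castSucc)) :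
    ∀ (n : ℕ) (x : Fin n → (Fin 4 → ℝ)) (v : V),
      Θ (N n x v) = Nc n (fun i => -(x i)) (Θ v) := by

  have hΘ' : ∀ u v : V, Θ (u - v) = Θ u - Θ v := by
    intro u v
    have h1 : Θ (-v) = -Θ v := by
      have := hΘsmul (-1) v
      simpa using this
    rw [sub_eq_add_neg, hΘadd, h1, sub_eq_add_neg]
  have hΘsum : ∀ (m : ℕ) (f : Fin m → V), Θ (∑ i, f i) = ∑ i, Θ (f i) := by
    intro m f
    exact map_sum (AddMonoidHom.mk' Θ hΘadd) f Finset.univ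
  have hinner : ∀ a b : Fin 4 → ℝ,
      (starRingEnd ℂ) (inner ℂ Ω (Φ a (Φ b Ω)) : ℂ)
        = (inner ℂ Ω (Φc (-a) (Φc (-b) Ω)) : ℂ) := by
    intro a b
    rw [← hΘinner, hΘΩ, hcov, hcov, hΘΩ]
  intro n
  induction n using Nat.strong_induction_on with
  | _ n ih =>
    match n, ih with
    | 0, ih =>
      intro x v
      rw [hN0, hNc0]
      rfl
    | 1, ih =>
      intro x v
      rw [hN1, hNc1]
      exact hcov _ v
    | (n+2), ih =>
      intro x v
      rw [hNrec, hNcrec]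
      simp only [LinearMap.sub_apply, Module.End.mul_apply, LinearMap.smul_apply,
        LinearMap.coe_sum, Finset.sum_apply]
      rw [hΘ', hΘsum]
      have h1 : Θ (N (n+1) (fun i => x i.castSucc) (Φ (x (Fin.last (n+1))) v))
          = Nc (n+1) (fun i => -(x i.castSucc)) (Φc (-(x (Fin.last (n+1)))) (Θ v)) := by
        rw [ih (n+1) (by omega), hcov]
      rw [h1]
      congr 1
      apply Finset.sum_congr rfl
      intro l _
      rw [hΘsmul, ih n (by omega), hinner]
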